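/- Let T ∈ M₄(ℂ) be normal, and let a, b, c, d ∈ ℂ with a·d − b·c ≠ 0 be such that c·T + d·1 is invertible (equivalently, the Möbius map M(z) = (az+b)/(cz+d) is finite at every eigenvalue of T). Define M(T) = (a·T + b·1)·(c·T + d·1)⁻¹. If the NE and SW corners of T have equal rank, then the NE and SW corners of M(T) have equal rank; and if the NE and SW corners of T have equal operator norm, then the NE and SW corners of M(T) have equal operator norm. -/

import Mathlib

open Matrix

noncomputable def opN {n : ℕ} (M : Matrix (Fin n) (Fin n) ℂ) : ℝ :=
  ‖Matrix.toEuclideanCLM (𝕜 := ℂ) M‖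

/-- The NE (north-east) 2×2 corner of a 4×4 matrix. -/
def NE (T : Matrix (Fin 4) (Fin 4) ℂ) : Matrix (Fin 2) (Fin 2) ℂ :=
  ![![T 0 2, T 0 3], ![T 1 2, T 1 3]]

/-- The SW (south-west) 2×2 corner of a 4×4 matrix. -/
def SW (T : Matrix (Fin 4) (Fin 4) ℂ) : Matrix (Fin 2) (Fin 2) ℂ :=
  ![![T 2 0, T 2 1], ![T 3 0, T 3 1]]

/-! ### Auxiliary lemmas -/

theorem det_fin_four' (M : Matrix (Fin 4) (Fin 4) ℂ) :
    M.det =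
      M 0 0 * (M 1 1 * (M 2 2 * M 3 3 - M 2 3 * M 3 2) - M 1 2 * (M 2 1 * M 3 3 - M 2 3 * M 3 1)
        + M 1 3 * (M 2 1 * M 3 2 - M 2 2 * M 3 1))
      - M 0 1 * (M 1 0 * (M 2 2 * M 3 3 - M 2 3 * M 3 2) - M 1 2 * (M 2 0 * M 3 3 - M 2 3 * M 3 0)
        + M 1 3 * (M 2 0 * M 3 2 - M 2 2 * M 3 0))
      + M 0 2 * (M 1 0 * (M 2 1 * M 3 3 - M 2 3 * M 3 1) - M 1 1 * (M 2 0 * M 3 3 - M 2 3 * M 3 0)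
        + M 1 3 * (M 2 0 * M 3 1 - M 2 1 * M 3 0))
      - M 0 3 * (M 1 0 * (M 2 1 * M 3 2 - M 2 2 * M 3 1) - M 1 1 * (M 2 0 * M 3 2 - M 2 2 * M 3 0)
        + M 1 2 * (M 2 0 * M 3 1 - M 2 1 * M 3 0)) := by
  rw [Matrix.det_succ_row_zero]
  simp [Fin.sum_univ_succ, Matrix.det_fin_three, Fin.succAbove, Matrix.submatrix_apply,
    show (Fin.succ 2 : Fin 4) = 3 from rfl, show Fin.castSucc (2 : Fin 3) = (2 : Fin 4) from rfl]
  ring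

theorem adj_entry (W : Matrix (Fin 4) (Fin 4) ℂ) (i j : Fin 4) :
    W.adjugate i j = ((W.updateRow j (Pi.single i 1))).det := Matrix.adjugate_apply W i j

set_option maxHeartbeats 2000000 in
theorem jacobiNE (W : Matrix (Fin 4) (Fin 4) ℂ) :
    (NE (Matrix.adjugate W)).det = (NE W).det * W.det := by
  rw [Matrix.det_fin_two, Matrix.det_fin_two]
  simp only [NE, Matrix.cons_val', Matrix.cons_val_zero, Matrix.cons_val_one, Matrix.head_cons,
    Matrix.empty_val', Matrix.cons_val_fin_one, Matrix.head_fin_const]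
  rw [adj_entry, adj_entry, adj_entry, adj_entry, det_fin_four', det_fin_four', det_fin_four',
    det_fin_four', det_fin_four']
  simp only [Matrix.updateRow_apply, Pi.single_apply, Fin.reduceEq, reduceIte]
  ring

set_option maxHeartbeats 2000000 in
theorem jacobiSW (W : Matrix (Fin 4) (Fin 4) ℂ) :
    (SW (Matrix.adjugate W)).det = (SW W).det * W.det := by
  rw [Matrix.det_fin_two, Matrix.det_fin_two]
  simp only [SW, Matrix.cons_val', Matrix.cons_val_zero, Matrix.cons_val_one, Matrix.head_cons,
    Matrix.empty_val', Matrix.cons_val_fin_one, Matrix.head_fin_const]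
  rw [adj_entry, adj_entry, adj_entry, adj_entry, det_fin_four', det_fin_four', det_fin_four',
    det_fin_four', det_fin_four']
  simp only [Matrix.updateRow_apply, Pi.single_apply, Fin.reduceEq, reduceIte]
  ring

set_option maxHeartbeats 2000000 in
theorem adjNE_zero (W : Matrix (Fin 4) (Fin 4) ℂ) (h : NE W = 0) : NE (Matrix.adjugate W) = 0 := by
  have h02 : W 0 2 = 0 := congrFun (congrFun h 0) 0
  have h03 : W 0 3 = 0 := congrFun (congrFun h 0) 1
  have h12 : W 1 2 = 0 := congrFun (congrFun h 1) 0
  have h13 : W 1 3 = 0 := congrFun (congrFun h 1) 1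
  ext i j
  fin_cases i <;> fin_cases j <;>
  · show Matrix.adjugate W _ _ = 0
    rw [adj_entry, det_fin_four']
    simp only [Matrix.updateRow_apply, Pi.single_apply, Fin.reduceEq, reduceIte, h02, h03, h12, h13]
    ring

set_option maxHeartbeats 2000000 in
theorem adjSW_zero (W : Matrix (Fin 4) (Fin 4) ℂ) (h : SW W = 0) : SW (Matrix.adjugate W) = 0 := by
  have h20 : W 2 0 = 0 := congrFun (congrFun h 0) 0
  have h21 : W 2 1 = 0 := congrFun (congrFun h 0) 1
  have h30 : W 3 0 = 0 := congrFun (congrFun h 1) 0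
  have h31 : W 3 1 = 0 := congrFun (congrFun h 1) 1
  ext i j
  fin_cases i <;> fin_cases j <;>
  · show Matrix.adjugate W _ _ = 0
    rw [adj_entry, det_fin_four']
    simp only [Matrix.updateRow_apply, Pi.single_apply, Fin.reduceEq, reduceIte, h20, h21, h30, h31]
    ring

theorem NE_smul (k : ℂ) (M : Matrix (Fin 4) (Fin 4) ℂ) : NE (k • M) = k • NE M := by
  ext i j; fin_cases i <;> fin_cases j <;> rfl
theorem SW_smul (k : ℂ) (M : Matrix (Fin 4) (Fin 4) ℂ) : SW (k • M) = k • SW M := by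
  ext i j; fin_cases i <;> fin_cases j <;> rfl
theorem NE_add (M N : Matrix (Fin 4) (Fin 4) ℂ) : NE (M + N) = NE M + NE N := by
  ext i j; fin_cases i <;> fin_cases j <;> rfl
theorem SW_add (M N : Matrix (Fin 4) (Fin 4) ℂ) : SW (M + N) = SW M + SW N := by
  ext i j; fin_cases i <;> fin_cases j <;> rfl
theorem NE_one : NE (1 : Matrix (Fin 4) (Fin 4) ℂ) = 0 := by
  ext i j; fin_cases i <;> fin_cases j <;> simp [NE, Matrix.one_apply]
theorem SW_one : SW (1 : Matrix (Fin 4) (Fin 4) ℂ) = 0 := by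
  ext i j; fin_cases i <;> fin_cases j <;> simp [SW, Matrix.one_apply]

theorem rank2_of_det_ne (X : Matrix (Fin 2) (Fin 2) ℂ) (h : X.det ≠ 0) : X.rank = 2 := by
  have := Matrix.rank_of_isUnit X ((Matrix.isUnit_iff_isUnit_det X).mpr (isUnit_iff_ne_zero.mpr h))
  simpa using this

theorem rank1_of (X : Matrix (Fin 2) (Fin 2) ℂ) (hd : X.det = 0) (hX : X ≠ 0) : X.rank = 1 := by
  have hrn := LinearMap.finrank_range_add_finrank_ker X.mulVecLin
  have hdim : Module.finrank ℂ (Fin 2 → ℂ) = 2 := by simp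
  obtain ⟨v, hv, hv0⟩ := (Matrix.exists_mulVec_eq_zero_iff).mpr hd
  have hker : 0 < Module.finrank ℂ (LinearMap.ker X.mulVecLin) := by
    rw [Module.finrank_pos_iff_exists_ne_zero]
    exact ⟨⟨v, by simpa [Matrix.mulVecLin] using hv0⟩, by simpa using hv⟩
  have hrange : 0 < X.rank := by
    rcases Nat.eq_zero_or_pos X.rank with h | h
    pick_goal 2
    · exact h
    · exfalso
      apply hX
      have : LinearMap.range X.mulVecLin = ⊥ := by
        rw [← Submodule.finrank_eq_zero]
        exact h
      have h0 : X.mulVecLin = 0 := LinearMap.range_eq_bot.mp this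
      ext i j
      have := congrFun (congrArg (fun f => f (Pi.single j 1)) (congrArg DFunLike.coe h0)) i
      simpa [Matrix.mulVecLin, Matrix.mulVec_single] using this
  have : X.rank + Module.finrank ℂ (LinearMap.ker X.mulVecLin) = 2 := by
    rw [Matrix.rank]; rw [hrn] at *; omega
  omega

theorem rank_eq_of_iff (X Y : Matrix (Fin 2) (Fin 2) ℂ) (h0 : X = 0 ↔ Y = 0)
    (hd : X.det = 0 ↔ Y.det = 0) : X.rank = Y.rank := by
  by_cases hdx : X.det = 0
  · by_cases hx : X = 0
    · rw [hx, h0.mp hx]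
    · rw [rank1_of X hdx hx, rank1_of Y (hd.mp hdx) (fun hy => hx (h0.mpr hy))]
  · rw [rank2_of_det_ne X hdx, rank2_of_det_ne Y (fun hy => hdx (hd.mpr hy))]

theorem rank_smul' (k : ℂ) (hk : k ≠ 0) (X : Matrix (Fin 2) (Fin 2) ℂ) : (k • X).rank = X.rank := by
  have : k • X = (k • (1 : Matrix (Fin 2) (Fin 2) ℂ)) * X := by
    rw [Matrix.smul_mul, one_mul]
  rw [this]
  apply Matrix.rank_mul_eq_right_of_isUnit_det
  simp [Matrix.det_smul, isUnit_iff_ne_zero, hk]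

theorem mem_spec2 (M : Matrix (Fin 2) (Fin 2) ℂ) (z : ℂ) :
    z ∈ spectrum ℂ M ↔ z ^ 2 - M.trace * z + M.det = 0 := by
  rw [spectrum.mem_iff, Matrix.isUnit_iff_isUnit_det, isUnit_iff_ne_zero, not_ne_iff]
  have : (algebraMap ℂ (Matrix (Fin 2) (Fin 2) ℂ) z - M).det
      = z ^ 2 - M.trace * z + M.det := by
    rw [Matrix.det_fin_two, Matrix.trace_fin_two, Matrix.det_fin_two]
    simp [Matrix.algebraMap_matrix_apply, Matrix.sub_apply]
    ring
  rw [this]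

theorem opN_sq (X : Matrix (Fin 2) (Fin 2) ℂ) :
    opN X ^ 2 = ‖Matrix.toEuclideanCLM (𝕜 := ℂ) (Xᴴ * X)‖ := by
  rw [_root_.map_mul]
  have : Matrix.toEuclideanCLM (𝕜 := ℂ) Xᴴ = star (Matrix.toEuclideanCLM (𝕜 := ℂ) X) := by
    rw [← map_star]; rfl
  rw [this, ContinuousLinearMap.star_eq_adjoint, ContinuousLinearMap.mul_def,
    ContinuousLinearMap.norm_adjoint_comp_self, opN, sq]

theorem isSA (X : Matrix (Fin 2) (Fin 2) ℂ) :
    IsSelfAdjoint (Matrix.toEuclideanCLM (𝕜 := ℂ) (Xᴴ * X)) := by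
  rw [_root_.IsSelfAdjoint, ← map_star]
  congr 1
  simp [star, Matrix.conjTranspose_mul]

theorem spec_comm (M : Matrix (Fin 2) (Fin 2) ℂ) :
    spectrum ℂ (Matrix.toEuclideanCLM (𝕜 := ℂ) M) = spectrum ℂ M :=
  AlgEquiv.spectrum_eq (Matrix.toEuclideanCLM (𝕜 := ℂ)) M

theorem normEq2 (X Y : Matrix (Fin 2) (Fin 2) ℂ)
    (h1 : (Xᴴ * X).trace = (Yᴴ * Y).trace) (h2 : (Xᴴ * X).det = (Yᴴ * Y).det) :
    opN X = opN Y := by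
  have hs : spectrum ℂ (Xᴴ * X) = spectrum ℂ (Yᴴ * Y) := by
    ext z; rw [mem_spec2, mem_spec2, h1, h2]
  have hn : ‖Matrix.toEuclideanCLM (𝕜 := ℂ) (Xᴴ * X)‖
      = ‖Matrix.toEuclideanCLM (𝕜 := ℂ) (Yᴴ * Y)‖ := by
    have hx := (isSA X).spectralRadius_eq_nnnorm
    have hy := (isSA Y).spectralRadius_eq_nnnorm
    have : spectralRadius ℂ (Matrix.toEuclideanCLM (𝕜 := ℂ) (Xᴴ * X))
        = spectralRadius ℂ (Matrix.toEuclideanCLM (𝕜 := ℂ) (Yᴴ * Y)) := by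
      unfold spectralRadius
      rw [spec_comm, spec_comm, hs]
    rw [hx, hy] at this
    exact_mod_cast congrArg ENNReal.toReal this
  have := (opN_sq X).trans (hn.trans (opN_sq Y).symm)
  have hx0 : 0 ≤ opN X := norm_nonneg _
  have hy0 : 0 ≤ opN Y := norm_nonneg _
  nlinarith [sq_nonneg (opN X - opN Y), sq_nonneg (opN X + opN Y)]

theorem norm_mem_spec (X : Matrix (Fin 2) (Fin 2) ℂ) :
    ((opN X ^ 2 : ℝ) : ℂ) ∈ spectrum ℂ (Xᴴ * X) := by
  set S := Matrix.toEuclideanCLM (𝕜 := ℂ) X with hS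
  have hstar : Matrix.toEuclideanCLM (𝕜 := ℂ) (Xᴴ * X) = star S * S := by
    rw [_root_.map_mul]
    congr 1
    rw [← map_star]; rfl
  have hmem : ‖star S * S‖ ∈ spectrum ℝ (star S * S) := by
    have hsa : _root_.IsSelfAdjoint (star S * S) := IsSelfAdjoint.star_mul_self S
    rcases CStarAlgebra.norm_or_neg_norm_mem_spectrum hsa with h | h
    · exact h
    · have h0 := spectrum_star_mul_self_nonneg _ h
      have : ‖star S * S‖ = 0 := by linarith [norm_nonneg (star S * S)]
      rw [this]; rw [this] at h; simpa using h
  have hr : opN X ^ 2 = ‖star S * S‖ := by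
    rw [ContinuousLinearMap.star_eq_adjoint, ContinuousLinearMap.mul_def,
      ContinuousLinearMap.norm_adjoint_comp_self, opN, sq]
  have hmemC : ((‖star S * S‖ : ℝ) : ℂ) ∈ spectrum ℂ (star S * S) := by
    have := spectrum.algebraMap_mem_iff (S := ℂ)
      (A := EuclideanSpace ℂ (Fin 2) →L[ℂ] EuclideanSpace ℂ (Fin 2))
      (a := star S * S) (r := ‖star S * S‖)
    exact this.mpr hmem
  rw [hr]
  rw [← spec_comm, hstar]
  exact hmemC

theorem detEq2 (X Y : Matrix (Fin 2) (Fin 2) ℂ)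
    (h1 : (Xᴴ * X).trace = (Yᴴ * Y).trace) (h3 : opN X = opN Y) :
    (Xᴴ * X).det = (Yᴴ * Y).det := by
  have hx := (mem_spec2 _ _).mp (norm_mem_spec X)
  have hy := (mem_spec2 _ _).mp (norm_mem_spec Y)
  rw [← h3] at hy
  rw [← h1] at hy
  linear_combination hx - hy

theorem frob (V : Matrix (Fin 4) (Fin 4) ℂ) (h : V * Vᴴ = Vᴴ * V) :
    ((NE V)ᴴ * NE V).trace = ((SW V)ᴴ * SW V).trace := by
  have h0 := congrFun (congrFun h 0) 0
  have h1 := congrFun (congrFun h 1) 1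
  simp only [Matrix.mul_apply, Fin.sum_univ_four, Matrix.conjTranspose_apply] at h0 h1
  rw [Matrix.trace_fin_two]
  rw [Matrix.trace_fin_two]
  simp only [Matrix.mul_apply, Fin.sum_univ_two, Matrix.conjTranspose_apply]
  simp only [Matrix.mul_apply, Fin.sum_univ_two, Matrix.conjTranspose_apply, NE, SW,
    Matrix.cons_val', Matrix.cons_val_zero, Matrix.cons_val_one, Matrix.head_cons,
    Matrix.empty_val', Matrix.cons_val_fin_one, Matrix.head_fin_const]
  have c : ∀ z : ℂ, star z = (starRingEnd ℂ) z := fun z => rfl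
  simp only [c] at *
  linear_combination h0 + h1

set_option synthInstance.maxHeartbeats 400000 in
theorem opN_smul (k : ℂ) (M : Matrix (Fin 2) (Fin 2) ℂ) : opN (k • M) = ‖k‖ * opN M := by
  rw [opN, _root_.map_smul, opN]
  exact norm_smul k (Matrix.toEuclideanCLM (𝕜 := ℂ) M)

theorem stmt6 (T : Matrix (Fin 4) (Fin 4) ℂ)
    (hnormal : T * Tᴴ = Tᴴ * T)
    (a b c d : ℂ) (hdet : a * d - b * c ≠ 0)
    (hinv : IsUnit (c • T + d • (1 : Matrix (Fin 4) (Fin 4) ℂ)))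
    (MT : Matrix (Fin 4) (Fin 4) ℂ)
    (hMT : MT = (a • T + b • 1) * (c • T + d • (1 : Matrix (Fin 4) (Fin 4) ℂ))⁻¹) :
    ((NE T).rank = (SW T).rank → (NE MT).rank = (SW MT).rank) ∧
    (opN (NE T) = opN (SW T) → opN (NE MT) = opN (SW MT)) := by
  by_cases hc : c = 0
  · -- easy case: MT = (a/d) • T + (b/d) • 1
    subst hc
    have hd0 : d ≠ 0 := by
      intro h; apply hdet; rw [h]; ring
    have ha0 : a ≠ 0 := by
      intro h; apply hdet; rw [h]; ring
    have hWinv : ((0 : ℂ) • T + d • (1 : Matrix (Fin 4) (Fin 4) ℂ))⁻¹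
        = d⁻¹ • (1 : Matrix (Fin 4) (Fin 4) ℂ) := by
      apply Matrix.inv_eq_right_inv
      rw [zero_smul, zero_add, Matrix.smul_mul, Matrix.mul_smul, one_mul, smul_smul,
        mul_inv_cancel₀ hd0, one_smul]
    have hMT' : MT = (d⁻¹ * a) • T + (d⁻¹ * b) • (1 : Matrix (Fin 4) (Fin 4) ℂ) := by
      rw [hMT, hWinv, Matrix.mul_smul, mul_one, smul_add, smul_smul, smul_smul]
    have hNE : NE MT = (d⁻¹ * a) • NE T := by
      rw [hMT', NE_add, NE_smul, NE_smul, NE_one, smul_zero, add_zero]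
    have hSW : SW MT = (d⁻¹ * a) • SW T := by
      rw [hMT', SW_add, SW_smul, SW_smul, SW_one, smul_zero, add_zero]
    have hk : (d⁻¹ * a) ≠ 0 := by
      simp [hd0, ha0]
    constructor
    · intro h
      rw [hNE, hSW, rank_smul' _ hk, rank_smul' _ hk]; exact h
    · intro h
      rw [hNE, hSW, opN_smul, opN_smul, h]
  · -- main case
    set W : Matrix (Fin 4) (Fin 4) ℂ := c • T + d • 1 with hW
    have hWdet : IsUnit W.det := (Matrix.isUnit_iff_isUnit_det W).mp hinv
    have hWd0 : W.det ≠ 0 := by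
      intro h; rw [h] at hWdet; simpa using hWdet
    set β : ℂ := (b * c - a * d) / c with hβ
    have hβ0 : β ≠ 0 := by
      rw [hβ]
      apply div_ne_zero _ hc
      intro h; apply hdet
      linear_combination -h
    have hMT' : MT = (a / c) • (1 : Matrix (Fin 4) (Fin 4) ℂ) + β • W⁻¹ := by
      have hsplit : a • T + b • (1 : Matrix (Fin 4) (Fin 4) ℂ) = (a / c) • W + β • 1 := by
        rw [hW, smul_add, smul_smul, smul_smul, div_mul_cancel₀ a hc, add_assoc, ← add_smul]
        congr 2
        rw [div_mul_eq_mul_div, ← add_div, show a * d + (b * c - a * d) = b * c by ring]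
        exact (mul_div_cancel_right₀ b hc).symm
      rw [hMT, hsplit, Matrix.add_mul, Matrix.smul_mul, Matrix.smul_mul,
        Matrix.mul_nonsing_inv W hWdet, one_mul]
    have hNEMT : NE MT = β • NE W⁻¹ := by
      rw [hMT', NE_add, NE_smul, NE_smul, NE_one, smul_zero, zero_add]
    have hSWMT : SW MT = β • SW W⁻¹ := by
      rw [hMT', SW_add, SW_smul, SW_smul, SW_one, smul_zero, zero_add]
    have hNEW : NE W = c • NE T := by
      rw [hW, NE_add, NE_smul, NE_smul, NE_one, smul_zero, add_zero]
    have hSWW : SW W = c • SW T := by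
      rw [hW, SW_add, SW_smul, SW_smul, SW_one, smul_zero, add_zero]
    -- inverse via adjugate
    have hinvdef : W⁻¹ = (W.det)⁻¹ • W.adjugate := by
      rw [Matrix.inv_def, Ring.inverse_eq_inv]
    have hNEinv : NE W⁻¹ = (W.det)⁻¹ • NE W.adjugate := by
      rw [hinvdef, NE_smul]
    have hSWinv : SW W⁻¹ = (W.det)⁻¹ • SW W.adjugate := by
      rw [hinvdef, SW_smul]
    have hdetNEinv : (NE W⁻¹).det = ((W.det)⁻¹) ^ 2 * ((NE W).det * W.det) := by
      rw [hNEinv, Matrix.det_smul, jacobiNE]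
      simp
    have hdetSWinv : (SW W⁻¹).det = ((W.det)⁻¹) ^ 2 * ((SW W).det * W.det) := by
      rw [hSWinv, Matrix.det_smul, jacobiSW]
      simp
    have hWinv_det : (W⁻¹).det ≠ 0 := by
      rw [Matrix.det_nonsing_inv]
      simpa [Ring.inverse_eq_inv] using inv_ne_zero hWd0
    have hWinv_detU : IsUnit (W⁻¹).det := isUnit_iff_ne_zero.mpr hWinv_det
    constructor
    · -- rank part
      intro h
      have hrNE : (NE W⁻¹).rank = (NE W).rank := by
        apply rank_eq_of_iff
        · constructor
          · intro h0
            have : NE (W⁻¹).adjugate = 0 := adjNE_zero _ h0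
            have h1 : NE ((W⁻¹)⁻¹) = 0 := by
              rw [Matrix.inv_def, Ring.inverse_eq_inv, NE_smul, this, smul_zero]
            rwa [Matrix.nonsing_inv_nonsing_inv W hWdet] at h1
          · intro h0
            rw [hNEinv, adjNE_zero _ h0, smul_zero]
        · rw [hdetNEinv]
          constructor
          · intro h0
            rcases mul_eq_zero.mp h0 with h1 | h1
            · exact absurd h1 (pow_ne_zero 2 (inv_ne_zero hWd0))
            · rcases mul_eq_zero.mp h1 with h2 | h2
              · exact h2
              · exact absurd h2 hWd0
          · intro h0; rw [h0]; ring
      have hrSW : (SW W⁻¹).rank = (SW W).rank := by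
        apply rank_eq_of_iff
        · constructor
          · intro h0
            have : SW (W⁻¹).adjugate = 0 := adjSW_zero _ h0
            have h1 : SW ((W⁻¹)⁻¹) = 0 := by
              rw [Matrix.inv_def, Ring.inverse_eq_inv, SW_smul, this, smul_zero]
            rwa [Matrix.nonsing_inv_nonsing_inv W hWdet] at h1
          · intro h0
            rw [hSWinv, adjSW_zero _ h0, smul_zero]
        · rw [hdetSWinv]
          constructor
          · intro h0
            rcases mul_eq_zero.mp h0 with h1 | h1
            · exact absurd h1 (pow_ne_zero 2 (inv_ne_zero hWd0))
            · rcases mul_eq_zero.mp h1 with h2 | h2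
              · exact h2
              · exact absurd h2 hWd0
          · intro h0; rw [h0]; ring
      rw [hNEMT, hSWMT, rank_smul' _ hβ0, rank_smul' _ hβ0, hrNE, hrSW, hNEW, hSWW,
        rank_smul' _ hc, rank_smul' _ hc]
      exact h
    · -- norm part
      intro h
      have hWnormal : W * Wᴴ = Wᴴ * W := by
        rw [hW]
        simp only [Matrix.conjTranspose_add, Matrix.conjTranspose_smul, Matrix.conjTranspose_one,
          Matrix.add_mul, Matrix.mul_add, Matrix.smul_mul, Matrix.mul_smul, Matrix.mul_one,
          Matrix.one_mul, smul_smul, hnormal]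
        module
      have hWinv_normal : W⁻¹ * (W⁻¹)ᴴ = (W⁻¹)ᴴ * W⁻¹ := by
        rw [Matrix.conjTranspose_nonsing_inv, ← Matrix.mul_inv_rev, ← Matrix.mul_inv_rev,
          hWnormal]
      -- opN equality for W's corners
      have hnW : opN (NE W) = opN (SW W) := by
        rw [hNEW, hSWW, opN_smul, opN_smul, h]
      -- trace equality for W's corners, then det equality
      have ht1 := frob W hWnormal
      have hd1 := detEq2 (NE W) (SW W) ht1 hnW
      -- transfer det equality through adjugate/inverse
      have hd2 : ((NE W⁻¹)ᴴ * NE W⁻¹).det = ((SW W⁻¹)ᴴ * SW W⁻¹).det := by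
        rw [Matrix.det_mul, Matrix.det_mul, Matrix.det_conjTranspose, Matrix.det_conjTranspose,
          hdetNEinv, hdetSWinv]
        rw [Matrix.det_mul, Matrix.det_mul, Matrix.det_conjTranspose, Matrix.det_conjTranspose]
          at hd1
        simp only [star_mul', star_pow, star_inv₀]
        linear_combination ((star W.det)⁻¹ ^ 2 * star W.det * ((W.det)⁻¹ ^ 2 * W.det)) * hd1
      have ht2 := frob W⁻¹ hWinv_normal
      have hfinal := normEq2 (NE W⁻¹) (SW W⁻¹) ht2 hd2
      rw [hNEMT, hSWMT, opN_smul, opN_smul, hfinal]
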